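/- arXiv:2302.09451 — 4 statements merged into one kernel-verified Lean document; each statement's English description precedes it below -/
import Mathlib

section
/- Let Z be a real random variable with 0 < ‖Z‖_{L²} < ∞, and suppose there is a constant K₀ > 0 such that Pr(|Z| > t) ≤ exp(−t²/(K₀‖Z‖²_{L²})) for all t > 0. Then there exists a constant c > 0 depending only on K₀ such that E[|Z|] ≥ c · ‖Z‖_{L²}. Explicitly, if C > 0 is chosen so that K₀·exp(−C²/K₀) = 1/20, then E[|Z|] ≥ (9/(20C)) · ‖Z‖_{L²}. -/
open MeasureTheory

/-- The L² norm of a real random variable: `‖Z‖_{L²} = √(E[Z²])`. -/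
noncomputable def l2Norm {Ω : Type} [MeasurableSpace Ω] (μ : Measure Ω) (Z : Ω → ℝ) : ℝ :=
  Real.sqrt (∫ ω, (Z ω) ^ 2 ∂μ)

open Real Set Filter
lemma key_ineq {Ω : Type} [MeasurableSpace Ω] (μ : Measure Ω) [IsProbabilityMeasure μ]
    (K : ℝ) (hK : 0 < K) (Z : Ω → ℝ) (hZ : MemLp Z 2 μ) (hσ : 0 < l2Norm μ Z)
    (htail : ∀ t : ℝ, 0 < t →
      (μ {ω | t < |Z ω|}).toReal ≤ Real.exp (-(t ^ 2) / (K * (l2Norm μ Z) ^ 2)))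
    (u : ℝ) (hu : 0 < u) :
    l2Norm μ Z ^ 2 ≤ u * (∫ ω, |Z ω| ∂μ)
      + K * l2Norm μ Z ^ 2 * Real.exp (-(u ^ 2) / (K * l2Norm μ Z ^ 2)) := by
  set σ := l2Norm μ Z with hσdef
  set a : ℝ := K * σ ^ 2 with ha
  have ha0 : 0 < a := by positivity
  -- basic integrability
  have hZsq : Integrable (fun ω => Z ω ^ 2) μ := hZ.integrable_sq
  have hZ1 : Integrable Z μ := hZ.integrable one_le_two
  have hZabs : Integrable (fun ω => |Z ω|) μ := hZ1.abs
  have hm : AEStronglyMeasurable Z μ := hZ.aestronglyMeasurable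
  have hma : AEMeasurable (fun ω => |Z ω|) μ := measurable_abs.comp_aemeasurable hm.aemeasurable
  -- the auxiliary functions
  set Y : Ω → ℝ := fun ω => max (|Z ω| - u) 0 with hY
  set G : Ω → ℝ := fun ω => max (|Z ω| ^ 2 - u * |Z ω|) 0 with hG
  have hYm : AEMeasurable Y μ := (hma.sub aemeasurable_const).max aemeasurable_const
  have hGm : AEStronglyMeasurable G μ :=
    (((hma.pow_const 2).sub (aemeasurable_const.mul hma)).max
      aemeasurable_const).aestronglyMeasurable
  have hGnn : ∀ ω, 0 ≤ G ω := fun ω => le_max_right _ _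
  have hGle : ∀ ω, G ω ≤ Z ω ^ 2 := by
    intro ω
    have h1 : |Z ω| ^ 2 = Z ω ^ 2 := sq_abs _
    have h2 : 0 ≤ |Z ω| := abs_nonneg _
    simp only [hG, max_le_iff]
    constructor <;> nlinarith
  have hGint : Integrable G μ := by
    refine Integrable.mono' hZsq hGm ?_
    filter_upwards with ω
    rw [Real.norm_eq_abs, abs_of_nonneg (hGnn ω)]; exact hGle ω
  -- Step A : ∫ Z² ≤ u ∫ |Z| + ∫ G
  have stepA : ∫ ω, Z ω ^ 2 ∂μ ≤ u * (∫ ω, |Z ω| ∂μ) + ∫ ω, G ω ∂μ := by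
    have : ∫ ω, Z ω ^ 2 ∂μ ≤ ∫ ω, (u * |Z ω| + G ω) ∂μ := by
      refine integral_mono hZsq ((hZabs.const_mul u).add hGint) ?_
      intro ω
      have h1 : |Z ω| ^ 2 = Z ω ^ 2 := sq_abs _
      simp only [hG]; nlinarith [le_max_left (|Z ω| ^ 2 - u * |Z ω|) 0]
    rwa [integral_add (hZabs.const_mul u) hGint, integral_const_mul] at this
  -- G ω = (Y ω)^2 + u * Y ω
  have hGY : ∀ ω, G ω = Y ω ^ 2 + u * Y ω := by
    intro ω
    simp only [hG, hY]
    rcases le_total (|Z ω|) u with h | h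
    · rw [max_eq_right (by nlinarith [abs_nonneg (Z ω)]), max_eq_right (by linarith)]; ring
    · rw [max_eq_left (by nlinarith), max_eq_left (by linarith)]; ring
  -- interval integral of 2t+u
  have hprim : ∀ y : ℝ, (∫ t in (0:ℝ)..y, (2 * t + u)) = y ^ 2 + u * y := by
    intro y
    rw [intervalIntegral.integral_add (f := fun t => 2 * t) (g := fun _ => u) ((continuous_const.mul continuous_id').intervalIntegrable _ _)
        intervalIntegrable_const, intervalIntegral.integral_const_mul, integral_id,
        intervalIntegral.integral_const]
    simp; ring
  -- layer cake
  have hYnn : 0 ≤ᵐ[μ] Y := Filter.Eventually.of_forall (fun ω => le_max_right _ _)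
  have g_intble : ∀ t > (0:ℝ), IntervalIntegrable (fun s => 2 * s + u) volume 0 t :=
    fun t _ => ((continuous_const.mul continuous_id').add continuous_const).intervalIntegrable _ _
  have g_nn : ∀ᵐ t ∂(volume.restrict (Ioi (0:ℝ))), 0 ≤ 2 * t + u := by
    filter_upwards [ae_restrict_mem measurableSet_Ioi] with t ht
    have : (0:ℝ) < t := ht
    linarith
  have hlc := lintegral_comp_eq_lintegral_meas_lt_mul μ hYnn hYm g_intble g_nn
  have hlcG : ∫⁻ ω, ENNReal.ofReal (G ω) ∂μ
      = ∫⁻ t in Ioi (0:ℝ), μ {ω | t < Y ω} * ENNReal.ofReal (2 * t + u) := by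
    rw [← hlc]
    exact lintegral_congr fun ω => by rw [hprim, hGY]
  -- bound the tail integral
  have hbound : ∫⁻ t in Ioi (0:ℝ), μ {ω | t < Y ω} * ENNReal.ofReal (2 * t + u)
      ≤ ∫⁻ t in Ioi (0:ℝ), ENNReal.ofReal (2 * (t + u) * Real.exp (-(t + u) ^ 2 / a)) := by
    refine setLIntegral_mono (by fun_prop) ?_
    intro t ht
    have ht0 : (0:ℝ) < t := ht
    have hset : {ω | t < Y ω} = {ω | t + u < |Z ω|} := by
      ext ω
      simp only [hY, Set.mem_setOf_eq, lt_max_iff]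
      constructor
      · rintro (h | h) <;> [linarith; linarith]
      · intro h; left; linarith
    have hμ : μ {ω | t < Y ω} ≤ ENNReal.ofReal (Real.exp (-(t + u) ^ 2 / a)) := by
      rw [hset, ← ENNReal.ofReal_toReal (measure_ne_top μ _)]
      exact ENNReal.ofReal_le_ofReal (htail (t + u) (by linarith))
    calc μ {ω | t < Y ω} * ENNReal.ofReal (2 * t + u)
        ≤ ENNReal.ofReal (Real.exp (-(t + u) ^ 2 / a)) * ENNReal.ofReal (2 * (t + u)) := by
          exact mul_le_mul' hμ (ENNReal.ofReal_le_ofReal (by linarith))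
      _ = ENNReal.ofReal (2 * (t + u) * Real.exp (-(t + u) ^ 2 / a)) := by
          rw [← ENNReal.ofReal_mul (Real.exp_pos _).le]; ring_nf
  -- compute the Gaussian-type integral
  have hderiv : ∀ x ∈ Ioi (0:ℝ), HasDerivAt (fun t => -a * Real.exp (-(t + u) ^ 2 / a))
      (2 * (x + u) * Real.exp (-(x + u) ^ 2 / a)) x := by
    intro x _
    have h1 : HasDerivAt (fun t : ℝ => -(t + u) ^ 2 / a) (-(2 * (x + u)) / a) x := by
      have := ((hasDerivAt_id x).add_const u).pow 2
      simpa using (this.neg.div_const a)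
    have h2 := (h1.exp).const_mul (-a)
    refine h2.congr_deriv ?_
    field_simp
  have htend : Tendsto (fun t : ℝ => -a * Real.exp (-(t + u) ^ 2 / a)) atTop (nhds 0) := by
    have h1 : Tendsto (fun t : ℝ => (t + u) ^ 2 / a) atTop atTop := by
      apply Tendsto.atTop_div_const ha0
      have := (tendsto_pow_atTop two_ne_zero).comp (tendsto_atTop_add_const_right atTop u tendsto_id)
      exact this
    have h2 : Tendsto (fun t : ℝ => Real.exp (-(t + u) ^ 2 / a)) atTop (nhds 0) := by
      have := Real.tendsto_exp_neg_atTop_nhds_zero.comp h1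
      convert this using 2 with t
      simp [Function.comp, neg_div]
    have := h2.const_mul (-a)
    simpa using this
  have hcont : ContinuousWithinAt (fun t : ℝ => -a * Real.exp (-(t + u) ^ 2 / a)) (Ici 0) 0 :=
    (Continuous.continuousWithinAt (by fun_prop))
  have hf'nn : ∀ x ∈ Ioi (0:ℝ), 0 ≤ 2 * (x + u) * Real.exp (-(x + u) ^ 2 / a) := by
    intro x hx
    have : (0:ℝ) < x := hx
    positivity
  have hval : ∫ t in Ioi (0:ℝ), 2 * (t + u) * Real.exp (-(t + u) ^ 2 / a)
      = a * Real.exp (-(u ^ 2) / a) := by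
    rw [integral_Ioi_of_hasDerivAt_of_nonneg hcont hderiv hf'nn htend]
    norm_num
  have hIntOn : IntegrableOn (fun t : ℝ => 2 * (t + u) * Real.exp (-(t + u) ^ 2 / a)) (Ioi 0) :=
    integrableOn_Ioi_deriv_of_nonneg hcont hderiv hf'nn htend
  have hofReal : ∫⁻ t in Ioi (0:ℝ), ENNReal.ofReal (2 * (t + u) * Real.exp (-(t + u) ^ 2 / a))
      = ENNReal.ofReal (a * Real.exp (-(u ^ 2) / a)) := by
    rw [← ofReal_integral_eq_lintegral_ofReal hIntOn ?_, hval]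
    filter_upwards [ae_restrict_mem measurableSet_Ioi] with t ht
    exact hf'nn t ht
  -- Step B : ∫ G ≤ a * exp(-u²/a)
  have stepB : ∫ ω, G ω ∂μ ≤ a * Real.exp (-(u ^ 2) / a) := by
    rw [integral_eq_lintegral_of_nonneg_ae (Filter.Eventually.of_forall hGnn) hGm]
    apply ENNReal.toReal_le_of_le_ofReal (by positivity)
    rw [hlcG]
    exact hbound.trans (le_of_eq hofReal)
  -- put together
  have hσ2 : σ ^ 2 = ∫ ω, Z ω ^ 2 ∂μ := by
    rw [hσdef, l2Norm, sq_sqrt (integral_nonneg fun ω => sq_nonneg _)]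
  calc σ ^ 2 = ∫ ω, Z ω ^ 2 ∂μ := hσ2
    _ ≤ u * (∫ ω, |Z ω| ∂μ) + ∫ ω, G ω ∂μ := stepA
    _ ≤ u * (∫ ω, |Z ω| ∂μ) + a * Real.exp (-(u ^ 2) / a) := by linarith [stepB]


lemma key2 {Ω : Type} [MeasurableSpace Ω] (μ : Measure Ω) [IsProbabilityMeasure μ]
    (K C : ℝ) (hK : 0 < K) (hC : 0 < C) (hKC : K * Real.exp (-(C ^ 2) / K) = 1 / 20)
    (Z : Ω → ℝ) (hZ : MemLp Z 2 μ) (hσ : 0 < l2Norm μ Z)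
    (htail : ∀ t : ℝ, 0 < t →
      (μ {ω | t < |Z ω|}).toReal ≤ Real.exp (-(t ^ 2) / (K * (l2Norm μ Z) ^ 2))) :
    (9 / (20 * C)) * l2Norm μ Z ≤ ∫ ω, |Z ω| ∂μ := by
  set σ := l2Norm μ Z with hσdef
  set E := ∫ ω, |Z ω| ∂μ with hE
  have h := key_ineq μ K hK Z hZ hσ htail (C * σ) (by positivity)
  have hexp : -((C * σ) ^ 2) / (K * σ ^ 2) = -(C ^ 2) / K := by
    field_simp
  rw [hexp] at h
  have h20 : K * σ ^ 2 * Real.exp (-(C ^ 2) / K) = σ ^ 2 * (1 / 20) := by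
    rw [← hKC]; ring
  rw [h20] at h
  rw [div_mul_eq_mul_div, div_le_iff₀ (by positivity)]
  nlinarith [mul_pos hσ hσ, sq_nonneg σ]

/-- If `Z` is a real random variable with `0 < ‖Z‖_{L²} < ∞` and Gaussian-type
tail `Pr(|Z| > t) ≤ exp(−t²/(K₀‖Z‖²_{L²}))` for all `t > 0`, then `E|Z| ≥ c‖Z‖_{L²}` for a
constant `c > 0` depending only on `K₀`; explicitly, if `C > 0` satisfies
`K₀·exp(−C²/K₀) = 1/20` then `E|Z| ≥ (9/(20C))·‖Z‖_{L²}`. -/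
theorem stmt_3 (K₀ : ℝ) (hK₀ : 0 < K₀) :
    (∃ c : ℝ, 0 < c ∧
      ∀ (Ω : Type) [MeasurableSpace Ω] (μ : Measure Ω), IsProbabilityMeasure μ →
        ∀ Z : Ω → ℝ, MemLp Z 2 μ → 0 < l2Norm μ Z →
          (∀ t : ℝ, 0 < t →
            (μ {ω | t < |Z ω|}).toReal ≤ Real.exp (-(t ^ 2) / (K₀ * (l2Norm μ Z) ^ 2))) →
          c * l2Norm μ Z ≤ ∫ ω, |Z ω| ∂μ) ∧
    (∀ C : ℝ, 0 < C → K₀ * Real.exp (-(C ^ 2) / K₀) = 1 / 20 →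
      ∀ (Ω : Type) [MeasurableSpace Ω] (μ : Measure Ω), IsProbabilityMeasure μ →
        ∀ Z : Ω → ℝ, MemLp Z 2 μ → 0 < l2Norm μ Z →
          (∀ t : ℝ, 0 < t →
            (μ {ω | t < |Z ω|}).toReal ≤ Real.exp (-(t ^ 2) / (K₀ * (l2Norm μ Z) ^ 2))) →
          (9 / (20 * C)) * l2Norm μ Z ≤ ∫ ω, |Z ω| ∂μ) := by
  constructor
  · set K₁ : ℝ := max K₀ 1 with hK₁def
    have hK₁1 : (1:ℝ) ≤ K₁ := le_max_right _ _
    have hK₁ : (0:ℝ) < K₁ := by linarith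
    have hK₀K₁ : K₀ ≤ K₁ := le_max_left _ _
    have hlog : 0 < Real.log (20 * K₁) := Real.log_pos (by linarith)
    set C : ℝ := Real.sqrt (K₁ * Real.log (20 * K₁)) with hCdef
    have hC : 0 < C := Real.sqrt_pos.mpr (by positivity)
    have hCsq : C ^ 2 = K₁ * Real.log (20 * K₁) := Real.sq_sqrt (by positivity)
    have hKC : K₁ * Real.exp (-(C ^ 2) / K₁) = 1 / 20 := by
      rw [hCsq]
      have h1 : -(K₁ * Real.log (20 * K₁)) / K₁ = -Real.log (20 * K₁) := by
        field_simp
      rw [h1, Real.exp_neg, Real.exp_log (by linarith)]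
      field_simp
    refine ⟨9 / (20 * C), by positivity, ?_⟩
    intro Ω _ μ hμ Z hZ hσ htail
    haveI := hμ
    refine key2 μ K₁ C hK₁ hC hKC Z hZ hσ ?_
    intro t ht
    refine (htail t ht).trans (Real.exp_le_exp.mpr ?_)
    rw [neg_div, neg_div, neg_le_neg_iff]
    have hσ2 : 0 < l2Norm μ Z ^ 2 := by positivity
    apply div_le_div_of_nonneg_left (by positivity) (by positivity)
    nlinarith
  · intro C hC hKC Ω _ μ hμ Z hZ hσ htail
    haveI := hμ
    exact key2 μ K₀ C hK₀ hC hKC Z hZ hσ htail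
end

section
/- Let (φ, y) be a random feature–reward pair in ℝ^d × ℝ with y = ⟨φ, θ⟩ + η, where η is independent of φ with E[η] = 0 and E[η²] = σ², E[φφᵀ] = I_d, and suppose the fourth-moment condition E[⟨φ,v⟩²⟨φ,u⟩²] ≤ L·E[⟨φ,v⟩²]·E[⟨φ,u⟩²] holds for all u, v ∈ ℝ^d. Let M := E[y² φφᵀ] and let A ∈ ℝ^{2d×2d} be the block matrix with upper-right block M and all other blocks zero. Then ‖A‖ = ‖M‖ ≤ L‖θ‖² + σ² and ‖A‖_F ≤ √d · (L‖θ‖² + σ²). -/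
open MeasureTheory ENNReal


/-- The operator norm of a real matrix, as the supremum of the bilinear form over the Euclidean
unit balls. -/
noncomputable def matOpNorm {ι : Type} [Fintype ι] (M : Matrix ι ι ℝ) : ℝ :=
  ⨆ q : {q : (ι → ℝ) × (ι → ℝ) // (∑ i, q.1 i ^ 2 ≤ 1) ∧ (∑ i, q.2 i ^ 2 ≤ 1)},
    ∑ i, ∑ j, q.1.1 i * M i j * q.1.2 j

/-- The Frobenius norm of a real matrix. -/
noncomputable def matFrobNorm {ι : Type} [Fintype ι] (M : Matrix ι ι ℝ) : ℝ :=
  Real.sqrt (∑ i, ∑ j, M i j ^ 2)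


lemma integrable_mul_of_L2 {α : Type*} [MeasurableSpace α] {μ : Measure α} {f g : α → ℝ}
    (hf : MemLp f 2 μ) (hg : MemLp g 2 μ) : Integrable (fun x => f x * g x) μ := by
  refine ((hf.integrable_sq.add hg.integrable_sq).div_const 2).mono'
    (hf.aestronglyMeasurable.mul hg.aestronglyMeasurable) (ae_of_all _ fun x => ?_)
  simp only [Pi.add_apply, Real.norm_eq_abs, abs_mul]
  nlinarith [sq_nonneg (|f x| - |g x|), sq_abs (f x), sq_abs (g x), abs_nonneg (f x), abs_nonneg (g x)]

lemma memL2_mul_of_L4 {α : Type*} [MeasurableSpace α] {μ : Measure α} {f g : α → ℝ}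
    (hf : MemLp f 4 μ) (hg : MemLp g 4 μ) : MemLp (fun x => f x * g x) 2 μ := by
  have h : (1 : ℝ≥0∞) / 2 = 1 / 4 + 1 / 4 := by
    rw [ENNReal.div_add_div_same, ENNReal.div_eq_inv_mul, ENNReal.div_eq_inv_mul]
    rw [show (4:ℝ≥0∞) = 2*2 by norm_num, ENNReal.mul_inv (by norm_num) (by norm_num)]
    ring_nf
    rw [sq, mul_assoc, ENNReal.inv_mul_cancel (by norm_num) (by norm_num), mul_one]
  haveI : ENNReal.HolderTriple 4 4 2 := ⟨by simpa [one_div] using h.symm⟩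
  exact hg.smul hf

lemma integral_mul_le_sqrt_CS {α : Type*} [MeasurableSpace α] {μ : Measure α} {f g : α → ℝ}
    (hf : MemLp f 2 μ) (hg : MemLp g 2 μ) :
    ∫ x, f x * g x ∂μ ≤ Real.sqrt (∫ x, f x ^ 2 ∂μ) * Real.sqrt (∫ x, g x ^ 2 ∂μ) := by
  have h1 : ∫ x, f x * g x ∂μ ≤ ∫ x, ‖f x‖ * ‖g x‖ ∂μ := by
    refine integral_mono (integrable_mul_of_L2 hf hg) ?_ ?_
    · exact (integrable_mul_of_L2 hf hg).abs.congr (ae_of_all _ fun x => by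
        simp [Real.norm_eq_abs, abs_mul])
    · intro x
      calc f x * g x ≤ |f x * g x| := le_abs_self _
      _ = ‖f x‖ * ‖g x‖ := by simp [Real.norm_eq_abs, abs_mul]
  have hpq : (2:ℝ).HolderConjugate 2 := Real.HolderConjugate.two_two
  have h2 := integral_mul_norm_le_Lp_mul_Lq hpq (by simpa using hf) (by simpa using hg)
  have e1 : ∀ h : α → ℝ, (∫ x, ‖h x‖ ^ (2:ℝ) ∂μ) = ∫ x, h x ^ 2 ∂μ := by
    intro h; congr 1; funext x
    rw [show ((2:ℝ)) = ((2:ℕ):ℝ) by norm_num, Real.rpow_natCast]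
    simp [sq_abs]
  rw [e1, e1] at h2
  rw [← Real.sqrt_eq_rpow, ← Real.sqrt_eq_rpow] at h2
  exact h1.trans h2

lemma key_bound (d : ℕ) (μφ : Measure (Fin d → ℝ)) [IsProbabilityMeasure μφ]
    (νη : Measure ℝ) [IsProbabilityMeasure νη] (θ : Fin d → ℝ) (σ L : ℝ)
    (hη0 : ∫ e, e ∂νη = 0) (hηvar : ∫ e, e ^ 2 ∂νη = σ ^ 2)
    (hηL2 : MemLp (fun e : ℝ => e) 2 νη)
    (hcov : ∀ i j, ∫ x, x i * x j ∂μφ = if i = j then (1 : ℝ) else 0)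
    (hφL4 : ∀ v : Fin d → ℝ, MemLp (fun x => ∑ i, x i * v i) 4 μφ)
    (h4th : ∀ u v : Fin d → ℝ,
      ∫ x, (∑ i, x i * v i) ^ 2 * (∑ i, x i * u i) ^ 2 ∂μφ ≤
        L * (∫ x, (∑ i, x i * v i) ^ 2 ∂μφ) * (∫ x, (∑ i, x i * u i) ^ 2 ∂μφ))
    (M : Matrix (Fin d) (Fin d) ℝ)
    (hM : ∀ i j, M i j =
      ∫ q, ((∑ k, q.1 k * θ k) + q.2) ^ 2 * (q.1 i * q.1 j) ∂(μφ.prod νη))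
    (u v : Fin d → ℝ) (hu : ∑ i, u i ^ 2 ≤ 1) (hv : ∑ i, v i ^ 2 ≤ 1) :
    ∑ i, ∑ j, u i * M i j * v j ≤ L * (∑ i, θ i ^ 2) + σ ^ 2 := by
  -- basic MemLp facts
  have hxi4 : ∀ i, MemLp (fun x : Fin d → ℝ => x i) 4 μφ := by
    intro i
    have h := hφL4 (Pi.single i 1)
    have e : (fun x : Fin d → ℝ => ∑ k, x k * (Pi.single i 1 : Fin d → ℝ) k)
        = fun x => x i := by funext x; simp [Pi.single_apply]
    rwa [e] at h
  have hxi2 : ∀ i, MemLp (fun x : Fin d → ℝ => x i) 2 μφ :=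
    fun i => (hxi4 i).mono_exponent (by norm_num)
  have hip2 : ∀ w : Fin d → ℝ, MemLp (fun x => ∑ i, x i * w i) 2 μφ :=
    fun w => (hφL4 w).mono_exponent (by norm_num)
  have int_xx : ∀ i j, Integrable (fun x : Fin d → ℝ => x i * x j) μφ :=
    fun i j => integrable_mul_of_L2 (hxi2 i) (hxi2 j)
  have hη_int : Integrable (fun e : ℝ => e) νη :=
    memLp_one_iff_integrable.mp (hηL2.mono_exponent (by norm_num))
  have hη2_int : Integrable (fun e : ℝ => e ^ 2) νη := hηL2.integrable_sq
  -- inner product identity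
  have hinner : ∀ a b : Fin d → ℝ,
      ∫ x, (∑ i, x i * a i) * (∑ i, x i * b i) ∂μφ = ∑ i, a i * b i := by
    intro a b
    have e : (fun x : Fin d → ℝ => (∑ i, x i * a i) * (∑ i, x i * b i))
        = fun x => ∑ i, ∑ j, a i * b j * (x i * x j) := by
      funext x
      rw [Finset.sum_mul_sum]
      exact Finset.sum_congr rfl fun i _ => Finset.sum_congr rfl fun j _ => by ring
    rw [e, integral_finset_sum _
      (fun i _ => integrable_finset_sum _ (fun j _ => ((int_xx i j).const_mul _)))]
    have e2 : ∀ i, ∫ x, ∑ j, a i * b j * (x i * x j) ∂μφ = a i * b i := by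
      intro i
      rw [integral_finset_sum _ (fun j _ => ((int_xx i j).const_mul _))]
      have e3 : ∀ j, ∫ x, a i * b j * (x i * x j) ∂μφ
          = a i * b j * (if i = j then (1:ℝ) else 0) := by
        intro j; rw [integral_const_mul, hcov]
      simp_rw [e3]
      simp
    simp_rw [e2]
  have hsec : ∀ a : Fin d → ℝ, ∫ x, (∑ i, x i * a i) ^ 2 ∂μφ = ∑ i, a i ^ 2 := by
    intro a
    simp_rw [pow_two]
    rw [hinner]
  -- nonnegativity of L * ∑ θ²
  have hθ2 : (0:ℝ) ≤ ∑ i, θ i ^ 2 := Finset.sum_nonneg fun i _ => sq_nonneg _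
  have hLθ : 0 ≤ L * ∑ i, θ i ^ 2 := by
    have h0 := h4th θ θ
    rw [hsec θ] at h0
    have h1 : (0:ℝ) ≤ ∫ x, (∑ i, x i * θ i) ^ 2 * (∑ i, x i * θ i) ^ 2 ∂μφ :=
      integral_nonneg fun x => mul_nonneg (sq_nonneg _) (sq_nonneg _)
    rcases eq_or_lt_of_le hθ2 with h | h
    · rw [← h]; simp
    · nlinarith
  -- integrability on the product measure
  have key_int : ∀ i j, Integrable
      (fun z : (Fin d → ℝ) × ℝ => ((∑ k, z.1 k * θ k) + z.2) ^ 2 * (z.1 i * z.1 j))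
      (μφ.prod νη) := by
    intro i j
    have e1 : Integrable (fun x : Fin d → ℝ => (∑ k, x k * θ k) ^ 2 * (x i * x j)) μφ := by
      refine (integrable_mul_of_L2 (memL2_mul_of_L4 (hφL4 θ) (hxi4 i))
        (memL2_mul_of_L4 (hφL4 θ) (hxi4 j))).congr (ae_of_all _ fun x => by ring)
    have e2 : Integrable (fun x : Fin d → ℝ => 2 * (∑ k, x k * θ k) * (x i * x j)) μφ := by
      refine ((integrable_mul_of_L2 (memL2_mul_of_L4 (hφL4 θ) (hxi4 i))
        (hxi2 j)).const_mul 2).congr (ae_of_all _ fun x => by ring)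
    refine ((e1.mul_prod (integrable_const (1:ℝ))).add
      ((e2.mul_prod hη_int).add ((int_xx i j).mul_prod hη2_int))).congr
      (ae_of_all _ fun z => by simp only [Pi.add_apply]; ring)
  -- swap sum and integral
  have swap : ∑ i, ∑ j, u i * M i j * v j
      = ∫ z : (Fin d → ℝ) × ℝ, ((∑ k, z.1 k * θ k) + z.2) ^ 2
          * ((∑ i, z.1 i * u i) * (∑ i, z.1 i * v i)) ∂(μφ.prod νη) := by
    have e : ∀ i j, u i * M i j * v j
        = ∫ z : (Fin d → ℝ) × ℝ,
            u i * v j * (((∑ k, z.1 k * θ k) + z.2) ^ 2 * (z.1 i * z.1 j)) ∂(μφ.prod νη) := by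
      intro i j
      rw [hM i j, integral_const_mul]
      ring
    simp_rw [e]
    have inner_swap : ∀ i, (∑ j, ∫ z : (Fin d → ℝ) × ℝ,
        u i * v j * (((∑ k, z.1 k * θ k) + z.2) ^ 2 * (z.1 i * z.1 j)) ∂(μφ.prod νη))
        = ∫ z : (Fin d → ℝ) × ℝ, ∑ j,
            u i * v j * (((∑ k, z.1 k * θ k) + z.2) ^ 2 * (z.1 i * z.1 j)) ∂(μφ.prod νη) :=
      fun i => (integral_finset_sum _ fun j _ => ((key_int i j).const_mul _)).symm
    simp_rw [inner_swap]
    rw [← integral_finset_sum _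
      (fun i _ => integrable_finset_sum _ (fun j _ => ((key_int i j).const_mul _)))]
    congr 1
    funext z
    rw [Finset.sum_mul_sum, Finset.mul_sum]
    refine Finset.sum_congr rfl fun i _ => ?_
    rw [Finset.mul_sum]
    exact Finset.sum_congr rfl fun j _ => by ring
  -- split the product integral
  have F1 : Integrable (fun x : Fin d → ℝ =>
      (∑ k, x k * θ k) ^ 2 * ((∑ i, x i * u i) * (∑ i, x i * v i))) μφ := by
    refine (integrable_mul_of_L2 (memL2_mul_of_L4 (hφL4 θ) (hφL4 u))
      (memL2_mul_of_L4 (hφL4 θ) (hφL4 v))).congr (ae_of_all _ fun x => by ring)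
  have F2 : Integrable (fun x : Fin d → ℝ =>
      2 * (∑ k, x k * θ k) * ((∑ i, x i * u i) * (∑ i, x i * v i))) μφ := by
    refine ((integrable_mul_of_L2 (memL2_mul_of_L4 (hφL4 θ) (hφL4 u))
      (hip2 v)).const_mul 2).congr (ae_of_all _ fun x => by ring)
  have F3 : Integrable (fun x : Fin d → ℝ => (∑ i, x i * u i) * (∑ i, x i * v i)) μφ :=
    integrable_mul_of_L2 (hip2 u) (hip2 v)
  have split : ∫ z : (Fin d → ℝ) × ℝ, ((∑ k, z.1 k * θ k) + z.2) ^ 2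
          * ((∑ i, z.1 i * u i) * (∑ i, z.1 i * v i)) ∂(μφ.prod νη)
      = (∫ x, (∑ k, x k * θ k) ^ 2 * ((∑ i, x i * u i) * (∑ i, x i * v i)) ∂μφ)
        + σ ^ 2 * ∑ i, u i * v i := by
    have e : (fun z : (Fin d → ℝ) × ℝ => ((∑ k, z.1 k * θ k) + z.2) ^ 2
          * ((∑ i, z.1 i * u i) * (∑ i, z.1 i * v i)))
        = fun z => ((∑ k, z.1 k * θ k) ^ 2 * ((∑ i, z.1 i * u i) * (∑ i, z.1 i * v i))) * (1:ℝ)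
          + ((2 * (∑ k, z.1 k * θ k) * ((∑ i, z.1 i * u i) * (∑ i, z.1 i * v i))) * z.2
            + ((∑ i, z.1 i * u i) * (∑ i, z.1 i * v i)) * z.2 ^ 2) := by
      funext z; ring
    rw [e]
    have I1 : Integrable (fun z : (Fin d → ℝ) × ℝ =>
        ((∑ k, z.1 k * θ k) ^ 2 * ((∑ i, z.1 i * u i) * (∑ i, z.1 i * v i))) * (1:ℝ))
        (μφ.prod νη) := by exact F1.mul_prod (integrable_const 1)
    have I2 : Integrable (fun z : (Fin d → ℝ) × ℝ =>
        (2 * (∑ k, z.1 k * θ k) * ((∑ i, z.1 i * u i) * (∑ i, z.1 i * v i))) * z.2)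
        (μφ.prod νη) := by exact F2.mul_prod hη_int
    have I3 : Integrable (fun z : (Fin d → ℝ) × ℝ =>
        ((∑ i, z.1 i * u i) * (∑ i, z.1 i * v i)) * z.2 ^ 2)
        (μφ.prod νη) := by exact F3.mul_prod hη2_int
    have I23 : Integrable (fun z : (Fin d → ℝ) × ℝ =>
        (2 * (∑ k, z.1 k * θ k) * ((∑ i, z.1 i * u i) * (∑ i, z.1 i * v i))) * z.2
        + ((∑ i, z.1 i * u i) * (∑ i, z.1 i * v i)) * z.2 ^ 2)
        (μφ.prod νη) := by exact I2.add I3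
    rw [integral_add I1 I23, integral_add I2 I3,
      integral_prod_mul (fun x : Fin d → ℝ =>
        (∑ k, x k * θ k) ^ 2 * ((∑ i, x i * u i) * (∑ i, x i * v i))) (fun _ : ℝ => (1:ℝ)),
      integral_prod_mul (fun x : Fin d → ℝ =>
        2 * (∑ k, x k * θ k) * ((∑ i, x i * u i) * (∑ i, x i * v i))) (fun e : ℝ => e),
      integral_prod_mul (fun x : Fin d → ℝ =>
        (∑ i, x i * u i) * (∑ i, x i * v i)) (fun e : ℝ => e ^ 2),
      hη0, hηvar, hinner u v]
    simp
    ring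
  -- Cauchy-Schwarz bound on the main term
  have b : ∀ w : Fin d → ℝ, (∑ i, w i ^ 2 ≤ 1) →
      ∫ x, ((∑ k, x k * θ k) * (∑ i, x i * w i)) ^ 2 ∂μφ ≤ L * ∑ i, θ i ^ 2 := by
    intro w hw
    have e : (fun x : Fin d → ℝ => ((∑ k, x k * θ k) * (∑ i, x i * w i)) ^ 2)
        = fun x => (∑ k, x k * θ k) ^ 2 * (∑ i, x i * w i) ^ 2 := by
      funext x; ring
    rw [e]
    have h := h4th w θ
    rw [hsec θ, hsec w] at h
    have hw0 : (0:ℝ) ≤ ∑ i, w i ^ 2 := Finset.sum_nonneg fun i _ => sq_nonneg _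
    nlinarith
  have CS : ∫ x, (∑ k, x k * θ k) ^ 2 * ((∑ i, x i * u i) * (∑ i, x i * v i)) ∂μφ
      ≤ L * ∑ i, θ i ^ 2 := by
    have e : (fun x : Fin d → ℝ =>
        (∑ k, x k * θ k) ^ 2 * ((∑ i, x i * u i) * (∑ i, x i * v i)))
        = fun x => ((∑ k, x k * θ k) * (∑ i, x i * u i))
            * ((∑ k, x k * θ k) * (∑ i, x i * v i)) := by
      funext x; ring
    rw [e]
    calc ∫ x, ((∑ k, x k * θ k) * (∑ i, x i * u i))
            * ((∑ k, x k * θ k) * (∑ i, x i * v i)) ∂μφ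
        ≤ Real.sqrt (∫ x, ((∑ k, x k * θ k) * (∑ i, x i * u i)) ^ 2 ∂μφ)
          * Real.sqrt (∫ x, ((∑ k, x k * θ k) * (∑ i, x i * v i)) ^ 2 ∂μφ) :=
          integral_mul_le_sqrt_CS (memL2_mul_of_L4 (hφL4 θ) (hφL4 u))
            (memL2_mul_of_L4 (hφL4 θ) (hφL4 v))
      _ ≤ Real.sqrt (L * ∑ i, θ i ^ 2) * Real.sqrt (L * ∑ i, θ i ^ 2) := by
          refine mul_le_mul (Real.sqrt_le_sqrt (b u hu)) (Real.sqrt_le_sqrt (b v hv))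
            (Real.sqrt_nonneg _) (Real.sqrt_nonneg _)
      _ = L * ∑ i, θ i ^ 2 := Real.mul_self_sqrt hLθ
  -- conclude
  have huv : ∑ i, u i * v i ≤ 1 := by
    have h := Finset.sum_mul_sq_le_sq_mul_sq Finset.univ u v
    have h1 : (0:ℝ) ≤ ∑ i, u i ^ 2 := Finset.sum_nonneg fun i _ => sq_nonneg _
    have h2 : (0:ℝ) ≤ ∑ i, v i ^ 2 := Finset.sum_nonneg fun i _ => sq_nonneg _
    nlinarith [sq_nonneg ((∑ i, u i * v i) - 1)]
  calc ∑ i, ∑ j, u i * M i j * v j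
      = (∫ x, (∑ k, x k * θ k) ^ 2 * ((∑ i, x i * u i) * (∑ i, x i * v i)) ∂μφ)
        + σ ^ 2 * ∑ i, u i * v i := swap.trans split
    _ ≤ L * (∑ i, θ i ^ 2) + σ ^ 2 := by
        have := mul_le_mul_of_nonneg_left huv (sq_nonneg σ)
        nlinarith [CS]

lemma assemble_norms (d : ℕ) (B : ℝ)
    (M : Matrix (Fin d) (Fin d) ℝ)
    (A : Matrix (Fin d ⊕ Fin d) (Fin d ⊕ Fin d) ℝ)
    (hA : A = Matrix.fromBlocks 0 M 0 0)
    (hbound : ∀ u v : Fin d → ℝ, (∑ i, u i ^ 2 ≤ 1) → (∑ i, v i ^ 2 ≤ 1) →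
      ∑ i, ∑ j, u i * M i j * v j ≤ B) :
    matOpNorm A = matOpNorm M ∧ matOpNorm M ≤ B ∧
      matFrobNorm A ≤ Real.sqrt d * B := by
  have hB0 : 0 ≤ B := by
    have h := hbound 0 0 (by simp) (by simp)
    simpa using h
  haveI hneM : Nonempty {q : ((Fin d → ℝ) × (Fin d → ℝ)) //
      (∑ i, q.1 i ^ 2 ≤ 1) ∧ (∑ i, q.2 i ^ 2 ≤ 1)} :=
    ⟨⟨(0, 0), by constructor <;> simp⟩⟩
  haveI hneA : Nonempty {q : ((Fin d ⊕ Fin d → ℝ) × (Fin d ⊕ Fin d → ℝ)) //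
      (∑ i, q.1 i ^ 2 ≤ 1) ∧ (∑ i, q.2 i ^ 2 ≤ 1)} :=
    ⟨⟨(0, 0), by constructor <;> simp⟩⟩
  -- value of the bilinear form of A
  have valA : ∀ q : {q : ((Fin d ⊕ Fin d → ℝ) × (Fin d ⊕ Fin d → ℝ)) //
      (∑ i, q.1 i ^ 2 ≤ 1) ∧ (∑ i, q.2 i ^ 2 ≤ 1)},
      (∑ i, ∑ j, q.1.1 i * A i j * q.1.2 j)
        = ∑ i, ∑ j, q.1.1 (Sum.inl i) * M i j * q.1.2 (Sum.inr j) := by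
    intro q
    simp [hA, Fintype.sum_sum_type]
  have constrA : ∀ (w : Fin d ⊕ Fin d → ℝ), (∑ i, w i ^ 2 ≤ 1) →
      (∑ i, w (Sum.inl i) ^ 2 ≤ 1) ∧ (∑ i, w (Sum.inr i) ^ 2 ≤ 1) := by
    intro w hw
    rw [Fintype.sum_sum_type] at hw
    have h1 : (0:ℝ) ≤ ∑ i, w (Sum.inl i) ^ 2 := Finset.sum_nonneg fun i _ => sq_nonneg _
    have h2 : (0:ℝ) ≤ ∑ i, w (Sum.inr i) ^ 2 := Finset.sum_nonneg fun i _ => sq_nonneg _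
    constructor <;> linarith
  have bddM : BddAbove (Set.range fun q : {q : ((Fin d → ℝ) × (Fin d → ℝ)) //
      (∑ i, q.1 i ^ 2 ≤ 1) ∧ (∑ i, q.2 i ^ 2 ≤ 1)} =>
      ∑ i, ∑ j, q.1.1 i * M i j * q.1.2 j) := by
    refine ⟨B, ?_⟩
    rintro x ⟨q, rfl⟩
    exact hbound q.1.1 q.1.2 q.2.1 q.2.2
  have bddA : BddAbove (Set.range fun q : {q : ((Fin d ⊕ Fin d → ℝ) × (Fin d ⊕ Fin d → ℝ)) //
      (∑ i, q.1 i ^ 2 ≤ 1) ∧ (∑ i, q.2 i ^ 2 ≤ 1)} =>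
      ∑ i, ∑ j, q.1.1 i * A i j * q.1.2 j) := by
    refine ⟨B, ?_⟩
    rintro x ⟨q, rfl⟩
    show (∑ i, ∑ j, q.1.1 i * A i j * q.1.2 j) ≤ B
    rw [valA q]
    exact hbound _ _ (constrA q.1.1 q.2.1).1 (constrA q.1.2 q.2.2).2
  have hMop : matOpNorm M ≤ B := by
    unfold matOpNorm
    exact ciSup_le fun q => hbound q.1.1 q.1.2 q.2.1 q.2.2
  have hEq : matOpNorm A = matOpNorm M := by
    unfold matOpNorm
    apply le_antisymm
    · refine ciSup_le fun q => ?_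
      rw [valA q]
      exact le_ciSup bddM (⟨(fun i => q.1.1 (Sum.inl i), fun j => q.1.2 (Sum.inr j)),
        ⟨(constrA q.1.1 q.2.1).1, (constrA q.1.2 q.2.2).2⟩⟩ :
        {q : ((Fin d → ℝ) × (Fin d → ℝ)) // (∑ i, q.1 i ^ 2 ≤ 1) ∧ (∑ i, q.2 i ^ 2 ≤ 1)})
    · refine ciSup_le fun q => ?_
      have hc1 : ∑ i, (Sum.elim q.1.1 (0 : Fin d → ℝ)) i ^ 2 ≤ 1 := by
        rw [Fintype.sum_sum_type]
        simpa using q.2.1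
      have hc2 : ∑ i, (Sum.elim (0 : Fin d → ℝ) q.1.2) i ^ 2 ≤ 1 := by
        rw [Fintype.sum_sum_type]
        simpa using q.2.2
      have hval : (∑ i, ∑ j, q.1.1 i * M i j * q.1.2 j)
          = ∑ i, ∑ j, (Sum.elim q.1.1 (0 : Fin d → ℝ)) i * A i j
              * (Sum.elim (0 : Fin d → ℝ) q.1.2) j := by
        simp [hA, Fintype.sum_sum_type]
      rw [hval]
      exact le_ciSup bddA (⟨(Sum.elim q.1.1 0, Sum.elim 0 q.1.2), ⟨hc1, hc2⟩⟩ :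
        {q : ((Fin d ⊕ Fin d → ℝ) × (Fin d ⊕ Fin d → ℝ)) //
          (∑ i, q.1 i ^ 2 ≤ 1) ∧ (∑ i, q.2 i ^ 2 ≤ 1)})
  refine ⟨hEq, hMop, ?_⟩
  -- Frobenius part
  have hcol : ∀ j, (∑ i, M i j ^ 2) ≤ B ^ 2 := by
    intro j
    have hc0 : 0 ≤ ∑ i, M i j ^ 2 := Finset.sum_nonneg fun i _ => sq_nonneg _
    rcases eq_or_lt_of_le hc0 with h | h
    · nlinarith
    · have hs0 : 0 < Real.sqrt (∑ i, M i j ^ 2) := Real.sqrt_pos.mpr h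
      have hss : Real.sqrt (∑ i, M i j ^ 2) ^ 2 = ∑ i, M i j ^ 2 := Real.sq_sqrt hc0
      have hu : ∑ i, (M i j / Real.sqrt (∑ i', M i' j ^ 2)) ^ 2 ≤ 1 := by
        have e : ∑ i, (M i j / Real.sqrt (∑ i', M i' j ^ 2)) ^ 2
            = (∑ i, M i j ^ 2) / Real.sqrt (∑ i', M i' j ^ 2) ^ 2 := by
          rw [Finset.sum_div]
          exact Finset.sum_congr rfl fun i _ => by ring
        rw [e, hss, div_self (ne_of_gt h)]
      have hv : ∑ i, ((Pi.single j 1 : Fin d → ℝ) i) ^ 2 ≤ 1 := by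
        simp [Pi.single_apply]
      have hval : ∑ i, ∑ k, (M i j / Real.sqrt (∑ i', M i' j ^ 2)) * M i k
          * (Pi.single j 1 : Fin d → ℝ) k = Real.sqrt (∑ i, M i j ^ 2) := by
        have e1 : ∀ i, ∑ k, (M i j / Real.sqrt (∑ i', M i' j ^ 2)) * M i k
            * (Pi.single j 1 : Fin d → ℝ) k
            = M i j ^ 2 / Real.sqrt (∑ i', M i' j ^ 2) := by
          intro i
          simp only [Pi.single_apply, mul_ite, mul_one, mul_zero,
            Finset.sum_ite_eq', Finset.mem_univ, if_true]
          ring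
        simp_rw [e1]
        rw [← Finset.sum_div, div_eq_iff (ne_of_gt hs0)]
        exact (Real.mul_self_sqrt hc0).symm
      have := hbound _ _ hu hv
      rw [hval] at this
      nlinarith
  have hfrob : matFrobNorm A = Real.sqrt (∑ i, ∑ j, M i j ^ 2) := by
    unfold matFrobNorm
    congr 1
    simp [hA, Fintype.sum_sum_type]
  rw [hfrob]
  have h1 : (∑ i, ∑ j, M i j ^ 2) ≤ d * B ^ 2 := by
    rw [Finset.sum_comm]
    calc ∑ j, ∑ i, M i j ^ 2 ≤ ∑ _j : Fin d, B ^ 2 :=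
          Finset.sum_le_sum fun j _ => hcol j
      _ = d * B ^ 2 := by simp [mul_comm]
  calc Real.sqrt (∑ i, ∑ j, M i j ^ 2) ≤ Real.sqrt (d * B ^ 2) := Real.sqrt_le_sqrt h1
    _ = Real.sqrt d * B := by
        rw [Real.sqrt_mul (by positivity), Real.sqrt_sq hB0]



/-- Let `(φ, y)` be a feature–reward pair with `y = ⟨φ,θ⟩ + η`, `η` mean-zero
with variance `σ²` independent of `φ`, `E[φφᵀ] = I_d`, and the fourth-moment condition with
constant `L`.  Let `M = E[y² φφᵀ]` and let `A` be the `2d × 2d` block matrix with upper-right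
block `M` and all other blocks zero.  Then `‖A‖ = ‖M‖ ≤ L‖θ‖² + σ²` and
`‖A‖_F ≤ √d (L‖θ‖² + σ²)`. -/
theorem stmt_16 (d : ℕ) (μφ : Measure (Fin d → ℝ)) [IsProbabilityMeasure μφ]
    (νη : Measure ℝ) [IsProbabilityMeasure νη] (θ : Fin d → ℝ) (σ L : ℝ)
    (hη0 : ∫ e, e ∂νη = 0) (hηvar : ∫ e, e ^ 2 ∂νη = σ ^ 2)
    (hηL2 : MemLp (fun e : ℝ => e) 2 νη)
    (hcov : ∀ i j, ∫ x, x i * x j ∂μφ = if i = j then (1 : ℝ) else 0)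
    (hφL4 : ∀ v : Fin d → ℝ, MemLp (fun x => ∑ i, x i * v i) 4 μφ)
    (h4th : ∀ u v : Fin d → ℝ,
      ∫ x, (∑ i, x i * v i) ^ 2 * (∑ i, x i * u i) ^ 2 ∂μφ ≤
        L * (∫ x, (∑ i, x i * v i) ^ 2 ∂μφ) * (∫ x, (∑ i, x i * u i) ^ 2 ∂μφ))
    (M : Matrix (Fin d) (Fin d) ℝ)
    (hM : ∀ i j, M i j =
      ∫ q, ((∑ k, q.1 k * θ k) + q.2) ^ 2 * (q.1 i * q.1 j) ∂(μφ.prod νη))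
    (A : Matrix (Fin d ⊕ Fin d) (Fin d ⊕ Fin d) ℝ)
    (hA : A = Matrix.fromBlocks 0 M 0 0) :
    matOpNorm A = matOpNorm M ∧
    matOpNorm M ≤ L * (∑ i, θ i ^ 2) + σ ^ 2 ∧
    matFrobNorm A ≤ Real.sqrt d * (L * (∑ i, θ i ^ 2) + σ ^ 2) := by
  exact assemble_norms d (L * (∑ i, θ i ^ 2) + σ ^ 2) M A hA
    (fun u v hu hv => key_bound d μφ νη θ σ L hη0 hηvar hηL2 hcov hφL4 h4th M hM u v hu hv)
end

section
/- For all integers u, s, m with 1 ≤ u ≤ s and m ≥ 2s, the binomial coefficients satisfy C(s, u) · C(m − s, s − u) / C(m, s) ≤ (2·e·s² / m)^u. -/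
/-- For all integers `u, s, m` with `1 ≤ u ≤ s` and `m ≥ 2s`,
`C(s, u) · C(m − s, s − u) / C(m, s) ≤ (2·e·s² / m)^u`. -/
theorem stmt_18 (u s m : ℕ) (hu : 1 ≤ u) (hus : u ≤ s) (hm : 2 * s ≤ m) :
    (s.choose u : ℝ) * ((m - s).choose (s - u) : ℝ) / (m.choose s : ℝ) ≤
      (2 * Real.exp 1 * (s : ℝ) ^ 2 / (m : ℝ)) ^ u := by
  have hsm : s ≤ m := by omega
  have hum : u ≤ m := hus.trans hsm
  have hm0 : 0 < m := by omega
  have hCpos : (0:ℝ) < (m.choose s : ℝ) := by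
    exact_mod_cast Nat.choose_pos hsm
  have hDpos : (0:ℝ) < (m.choose u : ℝ) := by
    exact_mod_cast Nat.choose_pos hum
  have hFpos : (0:ℝ) < (u.factorial : ℝ) := by exact_mod_cast u.factorial_pos
  have hF1 : (1:ℝ) ≤ (u.factorial : ℝ) := by exact_mod_cast u.factorial_pos
  have he1 : (1:ℝ) ≤ Real.exp 1 := by
    have := Real.add_one_le_exp (1:ℝ); linarith
  -- key natural-number inequality: B * D ≤ C * A
  have hid : (m.choose s) * (s.choose u) = (m.choose u) * ((m-u).choose (s-u)) :=
    Nat.choose_mul hus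
  have hBD : ((m-s).choose (s-u)) * (m.choose u) ≤ (m.choose s) * (s.choose u) := by
    calc ((m-s).choose (s-u)) * (m.choose u)
        ≤ ((m-u).choose (s-u)) * (m.choose u) :=
          Nat.mul_le_mul_right _ (Nat.choose_le_choose _ (Nat.sub_le_sub_left hus m))
      _ = (m.choose s) * (s.choose u) := by rw [hid]; ring
  have hBD' : ((m-s).choose (s-u) : ℝ) * (m.choose u : ℝ) ≤
      (m.choose s : ℝ) * (s.choose u : ℝ) := by exact_mod_cast hBD
  -- A * F ≤ s^u
  have hAF : u.factorial * s.choose u ≤ s ^ u := by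
    rw [← Nat.descFactorial_eq_factorial_mul_choose]
    exact Nat.descFactorial_le_pow _ _
  have hA : (s.choose u : ℝ) * (u.factorial : ℝ) ≤ (s:ℝ) ^ u := by
    rw [mul_comm]; exact_mod_cast hAF
  -- (m/2)^u ≤ D * F
  have hD : ((m:ℝ)/2) ^ u ≤ (m.choose u : ℝ) * (u.factorial : ℝ) := by
    have h1 : ((m + 1 - u : ℕ) ^ u : ℝ) / (u.factorial : ℝ) ≤ (m.choose u : ℝ) :=
      Nat.pow_le_choose u m
    have h2 : (m:ℝ)/2 ≤ ((m + 1 - u : ℕ) : ℝ) := by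
      have : ((m + 1 - u : ℕ) : ℝ) = (m:ℝ) + 1 - (u:ℝ) := by
        push_cast [Nat.cast_sub (by omega : u ≤ m + 1)]; ring
      rw [this]
      have hum2 : (2:ℝ) * u ≤ (m:ℝ) := by exact_mod_cast (by omega : 2 * u ≤ m)
      linarith
    calc ((m:ℝ)/2) ^ u ≤ ((m + 1 - u : ℕ) : ℝ) ^ u := by
          gcongr
      _ ≤ (m.choose u : ℝ) * (u.factorial : ℝ) := by
          rw [← div_le_iff₀ hFpos]; exact h1
  -- X * (m/2)^u = (e * s^2)^u
  set X : ℝ := (2 * Real.exp 1 * (s : ℝ) ^ 2 / (m : ℝ)) ^ u with hXdef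
  have hXnn : 0 ≤ X := by positivity
  have hX : X * ((m:ℝ)/2) ^ u = (Real.exp 1 * (s:ℝ)^2) ^ u := by
    rw [hXdef, ← mul_pow]
    congr 1
    field_simp
  -- A^2 ≤ X * D
  have hA2 : (s.choose u : ℝ) ^ 2 ≤ X * (m.choose u : ℝ) := by
    have key : (s.choose u : ℝ) ^ 2 * ((u.factorial:ℝ) * (u.factorial:ℝ)) ≤
        X * (m.choose u : ℝ) * ((u.factorial:ℝ) * (u.factorial:ℝ)) := by
      have h1 : (s.choose u : ℝ) ^ 2 * ((u.factorial:ℝ) * (u.factorial:ℝ)) ≤ ((s:ℝ)^2) ^ u := by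
        have := mul_le_mul hA hA (by positivity) (by positivity)
        calc (s.choose u : ℝ) ^ 2 * ((u.factorial:ℝ) * (u.factorial:ℝ))
            = ((s.choose u : ℝ) * (u.factorial:ℝ)) * ((s.choose u : ℝ) * (u.factorial:ℝ)) := by ring
          _ ≤ (s:ℝ)^u * (s:ℝ)^u := this
          _ = ((s:ℝ)^2) ^ u := by rw [← pow_mul, ← pow_add]; ring_nf
      have h2 : ((s:ℝ)^2) ^ u ≤ (Real.exp 1 * (s:ℝ)^2) ^ u :=
        pow_le_pow_left₀ (by positivity) (by nlinarith [sq_nonneg (s:ℝ)]) u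
      have h3 : (Real.exp 1 * (s:ℝ)^2) ^ u ≤ X * ((m.choose u : ℝ) * (u.factorial:ℝ)) := by
        rw [← hX]
        exact mul_le_mul_of_nonneg_left hD hXnn
      have h4 : X * ((m.choose u : ℝ) * (u.factorial:ℝ)) ≤
          X * (m.choose u : ℝ) * ((u.factorial:ℝ) * (u.factorial:ℝ)) := by
        have : X * ((m.choose u : ℝ) * (u.factorial:ℝ)) * 1 ≤
            X * ((m.choose u : ℝ) * (u.factorial:ℝ)) * (u.factorial:ℝ) := by
          apply mul_le_mul_of_nonneg_left hF1; positivity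
        calc X * ((m.choose u : ℝ) * (u.factorial:ℝ))
            = X * ((m.choose u : ℝ) * (u.factorial:ℝ)) * 1 := by ring
          _ ≤ X * ((m.choose u : ℝ) * (u.factorial:ℝ)) * (u.factorial:ℝ) := this
          _ = X * (m.choose u : ℝ) * ((u.factorial:ℝ) * (u.factorial:ℝ)) := by ring
      linarith
    have := mul_le_mul_of_nonneg_right key (le_of_lt (inv_pos.mpr (by positivity :
      (0:ℝ) < (u.factorial:ℝ) * (u.factorial:ℝ))))
    rwa [mul_assoc, mul_inv_cancel₀ (by positivity), mul_one, mul_assoc,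
      mul_inv_cancel₀ (by positivity), mul_one] at this
  -- conclude
  rw [div_le_iff₀ hCpos]
  have key : (s.choose u : ℝ) * ((m - s).choose (s - u) : ℝ) * (m.choose u : ℝ) ≤
      X * (m.choose s : ℝ) * (m.choose u : ℝ) := by
    calc (s.choose u : ℝ) * ((m - s).choose (s - u) : ℝ) * (m.choose u : ℝ)
        = (((m - s).choose (s - u) : ℝ) * (m.choose u : ℝ)) * (s.choose u : ℝ) := by ring
      _ ≤ ((m.choose s : ℝ) * (s.choose u : ℝ)) * (s.choose u : ℝ) := by
          apply mul_le_mul_of_nonneg_right hBD' (by positivity)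
      _ = (m.choose s : ℝ) * (s.choose u : ℝ)^2 := by ring
      _ ≤ (m.choose s : ℝ) * (X * (m.choose u : ℝ)) :=
          mul_le_mul_of_nonneg_left hA2 (le_of_lt hCpos)
      _ = X * (m.choose s : ℝ) * (m.choose u : ℝ) := by ring
  have := mul_le_mul_of_nonneg_right key (le_of_lt (inv_pos.mpr hDpos))
  rwa [mul_assoc, mul_inv_cancel₀ (ne_of_gt hDpos), mul_one, mul_assoc,
    mul_inv_cancel₀ (ne_of_gt hDpos), mul_one] at this
end

section
/- For every L > 0 there exists C > 0 such that the following holds. Let G ~ N(0,1) and define X₁ := G and X₂ := G if |G| ≤ C, X₂ := −G if |G| > C. Then: (i) X₂ has the standard normal distribution N(0,1) (so both X₁ and X₂ are sub-Gaussian with absolute-constant ψ₂ norm); and (ii) the difference Z := X₁ − X₂ satisfies ‖Z‖_{ψ2} > L · ‖Z‖_{L²}. In particular, marginal sub-Gaussianity of the coordinates of a process does not imply the sub-Gaussian-increment condition ‖Z‖_{ψ2} ≤ L‖Z‖_{L²} for any fixed L; indeed ‖Z‖_{ψ2} is bounded below by an absolute positive constant while ‖Z‖²_{L²} = O(C² e^{−C²})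 → 0 as C → ∞. -/
open MeasureTheory ProbabilityTheory
open Real
open scoped NNReal ENNReal

/-- The sub-Gaussian norm `‖Z‖_{ψ₂} = sup_{p ≥ 1} p^{-1/2} (E|Z|^p)^{1/p}`. -/
noncomputable def psi2Norm {Ω : Type} [MeasurableSpace Ω] (μ : Measure Ω) (Z : Ω → ℝ) : ℝ :=
  ⨆ p : {p : ℝ // 1 ≤ p}, ((p : ℝ) ^ (-(1/2) : ℝ)) * (∫ ω, |Z ω| ^ (p : ℝ) ∂μ) ^ ((p : ℝ)⁻¹)

-- integral representation
lemma gint (g : ℝ → ℝ) :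
    ∫ x, g x ∂(gaussianReal 0 1) = ∫ x, gaussianPDFReal 0 1 x * g x := by
  rw [gaussianReal_of_var_ne_zero 0 one_ne_zero]
  have : (gaussianPDF 0 1) = fun x => ((Real.toNNReal (gaussianPDFReal 0 1 x) : ℝ≥0) : ℝ≥0∞) := by
    ext x; rfl
  rw [this, integral_withDensity_eq_integral_smul
    ((measurable_gaussianPDFReal 0 1).real_toNNReal) g]
  refine integral_congr_ae (Filter.Eventually.of_forall fun x => ?_)
  simp [NNReal.smul_def, Real.coe_toNNReal _ (gaussianPDFReal_nonneg 0 1 x)]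

lemma gintegrable (g : ℝ → ℝ) :
    Integrable g (gaussianReal 0 1) ↔
      Integrable (fun x => g x * gaussianPDFReal 0 1 x) (volume : Measure ℝ) := by
  rw [gaussianReal_of_var_ne_zero 0 one_ne_zero]
  rw [integrable_withDensity_iff (measurable_gaussianPDF 0 1)
    (Filter.Eventually.of_forall fun x => ENNReal.ofReal_lt_top)]
  refine integrable_congr (Filter.Eventually.of_forall fun x => ?_)
  simp [gaussianPDF, ENNReal.toReal_ofReal (gaussianPDFReal_nonneg 0 1 x)]

lemma gpdf (x : ℝ) : gaussianPDFReal 0 1 x = (Real.sqrt (2 * π))⁻¹ * rexp (- x^2 / 2) := by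
  simp [gaussianPDFReal]

lemma key_prod (x : ℝ) : rexp (x^2/4) * gaussianPDFReal 0 1 x
    = (Real.sqrt (2 * π))⁻¹ * rexp (-(1/4) * x^2) := by
  rw [gpdf, mul_left_comm, ← Real.exp_add]; ring_nf

lemma hexp : Integrable (fun x => rexp (x^2/4)) (gaussianReal 0 1) := by
  rw [gintegrable]
  refine Integrable.congr (((integrable_exp_neg_mul_sq (by norm_num : (0:ℝ) < 1/4)).const_mul
    ((Real.sqrt (2 * π))⁻¹))) (Filter.Eventually.of_forall fun x => ?_)
  simp only []; rw [key_prod]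

lemma hexp_val : ∫ x, rexp (x^2/4) ∂(gaussianReal 0 1) = Real.sqrt 2 := by
  rw [gint]
  have : ∀ x, gaussianPDFReal 0 1 x * rexp (x^2/4)
      = (Real.sqrt (2 * π))⁻¹ * rexp (-(1/4) * x^2) := fun x => by rw [mul_comm, key_prod]
  rw [integral_congr_ae (Filter.Eventually.of_forall this), MeasureTheory.integral_const_mul,
    integral_gaussian]
  have h2π : (0:ℝ) < 2 * π := by positivity
  rw [show π / (1/4) = 2 * (2 * π) by ring, Real.sqrt_mul (by norm_num) (2*π)]
  field_simp

lemma tangent (u : ℝ) : Real.exp 1 * u ≤ Real.exp u := by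
  have h := Real.add_one_le_exp (u - 1)
  have : u ≤ Real.exp (u - 1) := by linarith
  calc Real.exp 1 * u ≤ Real.exp 1 * Real.exp (u - 1) := by
        nlinarith [Real.exp_pos (1:ℝ), Real.exp_pos (u-1)]
    _ = Real.exp u := by rw [← Real.exp_add]; ring_nf

lemma pt {p : ℝ} (hp : 1 ≤ p) (x : ℝ) :
    |x| ^ p ≤ (2 * p / Real.exp 1) ^ (p / 2) * Real.exp (x ^ 2 / 4) := by
  have hp0 : (0:ℝ) < p := lt_of_lt_of_le one_pos hp
  have hb : (0:ℝ) ≤ 2 * p / Real.exp 1 := by positivity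
  have h1 : |x| ^ p = (x ^ 2) ^ (p / 2) := by
    rw [← Real.sqrt_sq_eq_abs, Real.sqrt_eq_rpow, ← Real.rpow_mul (sq_nonneg x)]
    ring_nf
  -- exp (x^2/4) = (exp (x^2/(2p)))^(p/2)
  have h2 : Real.exp (x ^ 2 / 4) = (Real.exp (x ^ 2 / (2 * p))) ^ (p / 2) := by
    rw [← Real.exp_mul]
    congr 1
    field_simp
    ring
  have h3 : x ^ 2 ≤ 2 * p / Real.exp 1 * Real.exp (x ^ 2 / (2 * p)) := by
    have := tangent (x ^ 2 / (2 * p))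
    have hep : (0:ℝ) < Real.exp 1 := Real.exp_pos 1
    rw [div_mul_eq_mul_div, le_div_iff₀ hep]
    calc x ^ 2 * Real.exp 1 = 2 * p * (Real.exp 1 * (x ^ 2 / (2 * p))) := by
          field_simp
      _ ≤ 2 * p * Real.exp (x ^ 2 / (2 * p)) := by
          have h2p : (0:ℝ) < 2 * p := by linarith
          exact mul_le_mul_of_nonneg_left this h2p.le
  calc |x| ^ p = (x ^ 2) ^ (p / 2) := h1
    _ ≤ (2 * p / Real.exp 1 * Real.exp (x ^ 2 / (2 * p))) ^ (p / 2) :=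
        Real.rpow_le_rpow (sq_nonneg x) h3 (by positivity)
    _ = (2 * p / Real.exp 1) ^ (p / 2) * Real.exp (x ^ 2 / 4) := by
        rw [Real.mul_rpow hb (Real.exp_pos _).le, h2]

lemma hexp_le2 : ∫ x, rexp (x^2/4) ∂(gaussianReal 0 1) ≤ 2 := by
  rw [hexp_val]
  nlinarith [Real.sq_sqrt (show (0:ℝ) ≤ 2 by norm_num), Real.sqrt_nonneg 2]

-- the moment integral bound
lemma moment_bound {Z : ℝ → ℝ} (hZ : ∀ x, |Z x| ≤ 2 * |x|) {p : ℝ} (hp : 1 ≤ p) :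
    ∫ x, |Z x| ^ p ∂(gaussianReal 0 1) ≤ 2 ^ p * (2 * p / Real.exp 1) ^ (p / 2) * 2 := by
  have hp0 : (0:ℝ) < p := lt_of_lt_of_le one_pos hp
  have hb : (0:ℝ) ≤ 2 * p / Real.exp 1 := by positivity
  have hpw : ∀ x, |Z x| ^ p ≤ (2 ^ p * (2 * p / Real.exp 1) ^ (p / 2)) * rexp (x^2/4) := by
    intro x
    calc |Z x| ^ p ≤ (2 * |x|) ^ p :=
          Real.rpow_le_rpow (abs_nonneg _) (hZ x) hp0.le
      _ = 2 ^ p * |x| ^ p := Real.mul_rpow (by norm_num) (abs_nonneg _)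
      _ ≤ 2 ^ p * ((2 * p / Real.exp 1) ^ (p / 2) * rexp (x^2/4)) := by
          exact mul_le_mul_of_nonneg_left (pt hp x) (Real.rpow_nonneg (by norm_num) p)
      _ = (2 ^ p * (2 * p / Real.exp 1) ^ (p / 2)) * rexp (x^2/4) := by ring
  calc ∫ x, |Z x| ^ p ∂(gaussianReal 0 1)
      ≤ ∫ x, (2 ^ p * (2 * p / Real.exp 1) ^ (p / 2)) * rexp (x^2/4) ∂(gaussianReal 0 1) :=
        integral_mono_of_nonneg
          (Filter.Eventually.of_forall fun x => Real.rpow_nonneg (abs_nonneg _) p)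
          (hexp.const_mul _) (Filter.Eventually.of_forall hpw)
    _ = (2 ^ p * (2 * p / Real.exp 1) ^ (p / 2)) * ∫ x, rexp (x^2/4) ∂(gaussianReal 0 1) :=
        MeasureTheory.integral_const_mul _ _
    _ ≤ 2 ^ p * (2 * p / Real.exp 1) ^ (p / 2) * 2 := by
        exact mul_le_mul_of_nonneg_left hexp_le2 (by positivity)

-- the sup term bound
lemma term_bound {Z : ℝ → ℝ} (hZ : ∀ x, |Z x| ≤ 2 * |x|) {p : ℝ} (hp : 1 ≤ p) :
    p ^ (-(1/2) : ℝ) * (∫ x, |Z x| ^ p ∂(gaussianReal 0 1)) ^ p⁻¹ ≤ 4 := by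
  have hp0 : (0:ℝ) < p := lt_of_lt_of_le one_pos hp
  have hb : (0:ℝ) ≤ 2 * p / Real.exp 1 := by positivity
  have hI0 : (0:ℝ) ≤ ∫ x, |Z x| ^ p ∂(gaussianReal 0 1) :=
    integral_nonneg fun x => Real.rpow_nonneg (abs_nonneg _) p
  have h1 : (∫ x, |Z x| ^ p ∂(gaussianReal 0 1)) ^ p⁻¹
      ≤ (2 ^ p * (2 * p / Real.exp 1) ^ (p / 2) * 2) ^ p⁻¹ :=
    Real.rpow_le_rpow hI0 (moment_bound hZ hp) (by positivity)
  have h2 : (2 ^ p * (2 * p / Real.exp 1) ^ (p / 2) * 2 : ℝ) ^ p⁻¹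
      = 2 * (2 * p / Real.exp 1) ^ ((2:ℝ)⁻¹) * 2 ^ p⁻¹ := by
    rw [Real.mul_rpow (by positivity) (by norm_num),
      Real.mul_rpow (by positivity) (by positivity),
      ← Real.rpow_mul (by norm_num : (0:ℝ) ≤ 2),
      ← Real.rpow_mul hb,
      mul_inv_cancel₀ hp0.ne', Real.rpow_one,
      show (p / 2 * p⁻¹ : ℝ) = 2⁻¹ by field_simp]
  have h3 : ((2:ℝ)) ^ p⁻¹ ≤ 2 := by
    nth_rewrite 2 [show (2:ℝ) = 2 ^ (1:ℝ) by rw [Real.rpow_one]]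
    exact Real.rpow_le_rpow_of_exponent_le one_le_two (by
      rw [inv_le_one_iff₀]; right; exact hp)
  have h4 : (2 * p / Real.exp 1) ^ ((2:ℝ)⁻¹) = (2 / Real.exp 1) ^ ((2:ℝ)⁻¹) * p ^ ((2:ℝ)⁻¹) := by
    rw [← Real.mul_rpow (by positivity) hp0.le]
    congr 1
    ring
  have h5 : ((2:ℝ) / Real.exp 1) ^ ((2:ℝ)⁻¹) ≤ 1 :=
    Real.rpow_le_one (by positivity)
      (by rw [div_le_one (Real.exp_pos 1)]; nlinarith [Real.add_one_le_exp (1:ℝ)]) (by norm_num)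
  have h6 : p ^ (-(1/2) : ℝ) * p ^ ((2:ℝ)⁻¹) = 1 := by
    rw [← Real.rpow_add hp0]
    norm_num
  calc p ^ (-(1/2) : ℝ) * (∫ x, |Z x| ^ p ∂(gaussianReal 0 1)) ^ p⁻¹
      ≤ p ^ (-(1/2) : ℝ) * (2 * (2 * p / Real.exp 1) ^ ((2:ℝ)⁻¹) * 2 ^ p⁻¹) := by
        rw [← h2]
        exact mul_le_mul_of_nonneg_left h1 (Real.rpow_nonneg hp0.le _)
    _ ≤ p ^ (-(1/2) : ℝ) * (2 * ((2 / Real.exp 1) ^ ((2:ℝ)⁻¹) * p ^ ((2:ℝ)⁻¹)) * 2) := by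
        refine mul_le_mul_of_nonneg_left ?_ (Real.rpow_nonneg hp0.le _)
        rw [← h4]
        refine mul_le_mul_of_nonneg_left h3 (by positivity)
    _ = (p ^ (-(1/2) : ℝ) * p ^ ((2:ℝ)⁻¹)) * ((2 / Real.exp 1) ^ ((2:ℝ)⁻¹)) * 4 := by ring
    _ ≤ 4 := by
        rw [h6, one_mul]
        nlinarith [h5, Real.rpow_nonneg (show (0:ℝ) ≤ 2 / Real.exp 1 by positivity) ((2:ℝ)⁻¹)]

lemma gneg : (gaussianReal 0 1).map (fun x : ℝ => -x) = gaussianReal 0 1 := by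
  have h := gaussianReal_map_const_mul (μ := 0) (v := 1) (-1)
  simp only [neg_mul, one_mul, mul_zero, neg_zero] at h
  convert h using 2
  · ext x; simp

lemma map_flip (C : ℝ) :
    (gaussianReal 0 1).map (fun g : ℝ => if |g| ≤ C then g else -g) = gaussianReal 0 1 := by
  set B : Set ℝ := {g | |g| ≤ C} with hBdef
  have hB : MeasurableSet B := measurableSet_le (measurable_abs) measurable_const
  have hf : Measurable (fun g : ℝ => if |g| ≤ C then g else -g) :=
    Measurable.ite hB measurable_id measurable_neg
  refine Measure.ext fun s hs => ?_
  rw [Measure.map_apply hf hs]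
  have hpre : (fun g : ℝ => if |g| ≤ C then g else -g) ⁻¹' s
      = (s ∩ B) ∪ ((Neg.neg ⁻¹' (s ∩ Bᶜ))) := by
    ext x
    by_cases hx : |x| ≤ C <;>
      simp [Set.mem_preimage, hx, hBdef, abs_neg]
  rw [hpre]
  have hdisj : Disjoint (s ∩ B) (Neg.neg ⁻¹' (s ∩ Bᶜ)) := by
    refine Set.disjoint_left.mpr fun x hx hx' => ?_
    have h1 : x ∈ B := hx.2
    have h2 : -x ∈ Bᶜ := hx'.2
    simp only [hBdef, Set.mem_setOf_eq, Set.mem_compl_iff, abs_neg] at h1 h2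
    exact h2 h1
  rw [measure_union hdisj ((hs.inter hB.compl).preimage measurable_neg)]
  have hneg : (gaussianReal 0 1) (Neg.neg ⁻¹' (s ∩ Bᶜ)) = (gaussianReal 0 1) (s ∩ Bᶜ) := by
    conv_rhs => rw [← gneg]
    rw [Measure.map_apply measurable_neg (hs.inter hB.compl)]
  rw [hneg, Set.inter_comm s Bᶜ, ← Set.diff_eq_compl_inter]
  exact measure_inter_add_diff s hB

lemma tail_pos (C : ℝ) : 0 < (gaussianReal 0 1) {x : ℝ | ¬ |x| ≤ C} := by
  have hsub : Set.Ioi (max C 0) ⊆ {x : ℝ | ¬ |x| ≤ C} := by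
    intro x hx
    simp only [Set.mem_Ioi, lt_max_iff] at hx ⊢
    have hx' : C < x := lt_of_le_of_lt (le_max_left C 0) hx
    have hx0 : 0 < x := lt_of_le_of_lt (le_max_right C 0) hx
    simp only [Set.mem_setOf_eq, not_le, abs_of_pos hx0]
    exact hx'
  refine lt_of_lt_of_le ?_ (measure_mono hsub)
  by_contra h
  push_neg at h
  have h0 : (gaussianReal 0 1) (Set.Ioi (max C 0)) = 0 := le_antisymm h zero_le
  rw [gaussianReal_apply 0 one_ne_zero] at h0
  rw [setLIntegral_eq_zero_iff measurableSet_Ioi (measurable_gaussianPDF 0 1)] at h0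
  have h1 : ∀ᵐ x : ℝ, x ∉ Set.Ioi (max C 0) := by
    filter_upwards [h0] with x hx
    intro hmem
    exact absurd (hx hmem) (gaussianPDF_pos 0 one_ne_zero x).ne'
  have h2 : (volume : Measure ℝ) {a : ℝ | C < a ∧ 0 < a} = 0 := by
    simpa [ae_iff] using h1
  have h3 : (volume : Measure ℝ) (Set.Ioi (max C 0)) = 0 := by
    refine le_antisymm (le_trans (measure_mono ?_) h2.le) zero_le
    intro x hx
    simp only [Set.mem_Ioi, max_lt_iff] at hx
    exact ⟨hx.1, hx.2⟩
  rw [Real.volume_Ioi] at h3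
  exact ENNReal.top_ne_zero h3

lemma pt4 (x : ℝ) : x ^ 4 ≤ (8 / Real.exp 1) ^ 2 * Real.exp (x ^ 2 / 4) := by
  have h := pt (p := 4) (by norm_num) x
  have h1 : |x| ^ (4:ℝ) = x ^ 4 := by
    rw [show (4:ℝ) = ((4:ℕ):ℝ) by norm_num, Real.rpow_natCast, pow_abs,
      abs_of_nonneg (by positivity)]
  have h2 : ((2 * 4 / Real.exp 1 : ℝ)) ^ ((4:ℝ)/2) = (8 / Real.exp 1) ^ 2 := by
    rw [show ((4:ℝ)/2) = ((2:ℕ):ℝ) by norm_num, Real.rpow_natCast]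
    norm_num
  rw [h1, h2] at h
  exact h

/-- For every `L > 0` there exists `C > 0` such that, with `G ~ N(0,1)`,
`X₁ := G` and `X₂ := G` if `|G| ≤ C`, `X₂ := −G` otherwise:
(i) `X₂` is again standard normal, and
(ii) the difference `Z := X₁ − X₂` satisfies `‖Z‖_{ψ₂} > L · ‖Z‖_{L²}`.
Hence marginal sub-Gaussianity does not imply the sub-Gaussian-increment condition. -/
theorem stmt_19 (L : ℝ) (hL : 0 < L) :
    ∃ C : ℝ, 0 < C ∧
      ((gaussianReal 0 1).map (fun g : ℝ => if |g| ≤ C then g else -g) = gaussianReal 0 1) ∧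
      L * l2Norm (gaussianReal 0 1) (fun g => g - if |g| ≤ C then g else -g) <
        psi2Norm (gaussianReal 0 1) (fun g => g - if |g| ≤ C then g else -g) := by
  set μ := gaussianReal 0 1 with hμ
  refine ⟨4 * L + 1, by linarith, map_flip _, ?_⟩
  set C : ℝ := 4 * L + 1 with hCdef
  have hC : 0 < C := by simp only [hCdef]; linarith
  have hZfun : (fun g : ℝ => g - if |g| ≤ C then g else -g)
      = (fun g : ℝ => if |g| ≤ C then 0 else 2 * g) := by
    funext g; split <;> ring
  rw [hZfun]
  set Z : ℝ → ℝ := fun g : ℝ => if |g| ≤ C then 0 else 2 * g with hZdef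
  have habs : ∀ x, |Z x| ≤ 2 * |x| := by
    intro x
    simp only [hZdef]
    split
    · simp [abs_nonneg]
    · rw [abs_mul]; simp
  -- the set B and its complement
  have hB : MeasurableSet {x : ℝ | |x| ≤ C} := measurableSet_le measurable_abs measurable_const
  -- f4 and A
  set f4 : ℝ → ℝ := fun x => if |x| ≤ C then 0 else x ^ 4 with hf4def
  set A : ℝ := ∫ x, f4 x ∂μ with hAdef
  have hf4nonneg : ∀ x, 0 ≤ f4 x := by
    intro x; simp only [hf4def]; split
    · exact le_refl _
    · positivity
  have hf4meas : Measurable f4 :=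
    Measurable.ite hB measurable_const ((measurable_id.pow_const 4))
  have hf4int : Integrable f4 μ := by
    refine Integrable.mono (hexp.const_mul ((8 / Real.exp 1) ^ 2))
      hf4meas.aestronglyMeasurable (Filter.Eventually.of_forall fun x => ?_)
    rw [Real.norm_eq_abs, Real.norm_eq_abs, abs_of_nonneg (hf4nonneg x),
      abs_of_nonneg (by positivity)]
    refine le_trans ?_ (pt4 x)
    simp only [hf4def]
    split
    · positivity
    · exact le_refl _
  have hA0 : 0 ≤ A := integral_nonneg hf4nonneg
  -- A is positive
  have hApos : 0 < A := by
    have hT : MeasurableSet {x : ℝ | ¬ |x| ≤ C} := by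
      have : {x : ℝ | ¬ |x| ≤ C} = {x : ℝ | |x| ≤ C}ᶜ := rfl
      rw [this]; exact hB.compl
    have hind : (fun x : ℝ => if |x| ≤ C then (0:ℝ) else C ^ 4)
        = Set.indicator {x : ℝ | ¬ |x| ≤ C} (fun _ => C ^ 4) := by
      funext x
      simp only [Set.indicator, Set.mem_setOf_eq]
      by_cases hx : |x| ≤ C <;> simp [hx]
    have hlow : ∫ x, (if |x| ≤ C then (0:ℝ) else C ^ 4) ∂μ
        = (μ {x : ℝ | ¬ |x| ≤ C}).toReal • (C ^ 4) := by
      rw [hind, MeasureTheory.integral_indicator_const _ hT]; rfl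
    have hle : ∫ x, (if |x| ≤ C then (0:ℝ) else C ^ 4) ∂μ ≤ A := by
      refine integral_mono_of_nonneg (Filter.Eventually.of_forall fun x => ?_) hf4int
        (Filter.Eventually.of_forall fun x => ?_)
      · simp only [Pi.zero_apply]
        split
        · exact le_refl _
        · positivity
      · simp only [hf4def]
        split
        · exact le_refl _
        · rename_i hx
          push_neg at hx
          calc C ^ 4 ≤ |x| ^ 4 := pow_le_pow_left₀ hC.le hx.le 4
            _ = x ^ 4 := by rw [pow_abs, abs_of_nonneg (by positivity)]
      -- note: first bullet handled nonneg, second the bound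
    have htoReal : 0 < (μ {x : ℝ | ¬ |x| ≤ C}).toReal :=
      ENNReal.toReal_pos (tail_pos C).ne' (measure_ne_top _ _)
    have : 0 < (μ {x : ℝ | ¬ |x| ≤ C}).toReal • (C ^ 4) := by
      rw [smul_eq_mul]; positivity
    linarith [hlow ▸ hle]
  -- A ≤ 16
  have hA16 : A ≤ 16 := by
    have h1 : A ≤ ∫ x, (8 / Real.exp 1) ^ 2 * rexp (x^2/4) ∂μ := by
      refine integral_mono_of_nonneg (Filter.Eventually.of_forall hf4nonneg)
        (hexp.const_mul _) (Filter.Eventually.of_forall fun x => ?_)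
      refine le_trans ?_ (pt4 x)
      simp only [hf4def]
      split
      · positivity
      · exact le_refl _
    rw [MeasureTheory.integral_const_mul, hexp_val] at h1
    have he : (2.7182818283:ℝ) < Real.exp 1 := Real.exp_one_gt_d9
    have hs : Real.sqrt 2 ≤ 1.5 := by
      nlinarith [Real.sq_sqrt (show (0:ℝ) ≤ 2 by norm_num), Real.sqrt_nonneg 2]
    have hepos : (0:ℝ) < Real.exp 1 := Real.exp_pos 1
    have hsq : (8 / Real.exp 1) ^ 2 ≤ (8 / 2.7182818283) ^ 2 := by
      gcongr
    refine le_trans h1 (le_trans ?_ (by norm_num : (16:ℝ) ≤ 16))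
    calc (8 / Real.exp 1) ^ 2 * Real.sqrt 2 ≤ (8 / 2.7182818283) ^ 2 * 1.5 := by
          refine mul_le_mul hsq hs (Real.sqrt_nonneg 2) (by positivity)
      _ ≤ 16 := by norm_num
  -- the exact fourth moment of Z
  have hZ4 : ∫ x, |Z x| ^ (4:ℝ) ∂μ = 16 * A := by
    have : ∀ x, |Z x| ^ (4:ℝ) = 16 * f4 x := by
      intro x
      simp only [hZdef, hf4def]
      split
      · rw [abs_zero, show (4:ℝ) = ((4:ℕ):ℝ) by norm_num, Real.rpow_natCast]
        norm_num
      · rw [show (4:ℝ) = ((4:ℕ):ℝ) by norm_num, Real.rpow_natCast, pow_abs,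
          abs_of_nonneg (by positivity)]
        ring
    rw [integral_congr_ae (Filter.Eventually.of_forall this), MeasureTheory.integral_const_mul]
  -- psi2Norm lower bound
  have hpsi : A ^ ((4:ℝ)⁻¹) ≤ psi2Norm μ Z := by
    have hbdd : BddAbove (Set.range fun p : {p : ℝ // 1 ≤ p} =>
        ((p : ℝ) ^ (-(1/2) : ℝ)) * (∫ x, |Z x| ^ (p : ℝ) ∂μ) ^ ((p : ℝ)⁻¹)) := by
      refine ⟨4, ?_⟩
      rintro y ⟨p, rfl⟩
      exact term_bound habs p.2
    have hterm := le_ciSup hbdd (⟨(4:ℝ), by norm_num⟩ : {p : ℝ // 1 ≤ p})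
    rw [psi2Norm]
    refine le_trans (le_of_eq ?_) hterm
    simp only [hZ4]
    have h4 : ((4:ℝ)) ^ (-(1/2) : ℝ) = 1/2 := by
      rw [show (4:ℝ) = 2 ^ ((2:ℕ):ℝ) by rw [Real.rpow_natCast]; norm_num,
        ← Real.rpow_mul (by norm_num : (0:ℝ) ≤ 2)]
      norm_num
    have h16 : ((16:ℝ) * A) ^ ((4:ℝ)⁻¹) = 2 * A ^ ((4:ℝ)⁻¹) := by
      rw [Real.mul_rpow (by norm_num) hA0]
      congr 1
      rw [show (16:ℝ) = 2 ^ ((4:ℕ):ℝ) by rw [Real.rpow_natCast]; norm_num,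
        ← Real.rpow_mul (by norm_num : (0:ℝ) ≤ 2)]
      norm_num
    rw [h4, h16]
    ring
  -- L2 bound
  have hZ2 : ∫ x, (Z x) ^ 2 ∂μ ≤ 4 / C ^ 2 * A := by
    have hpw : ∀ x, (Z x) ^ 2 ≤ 4 / C ^ 2 * f4 x := by
      intro x
      simp only [hZdef, hf4def]
      split
      · norm_num
      · rename_i hx
        push_neg at hx
        have hx2 : C ^ 2 ≤ x ^ 2 := by
          calc C ^ 2 ≤ |x| ^ 2 := pow_le_pow_left₀ hC.le hx.le 2
            _ = x ^ 2 := sq_abs x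
        have hC2 : (0:ℝ) < C ^ 2 := by positivity
        rw [div_mul_eq_mul_div, le_div_iff₀ hC2]
        nlinarith [sq_nonneg x]
    calc ∫ x, (Z x) ^ 2 ∂μ ≤ ∫ x, 4 / C ^ 2 * f4 x ∂μ :=
          integral_mono_of_nonneg (Filter.Eventually.of_forall fun x => sq_nonneg _)
            (hf4int.const_mul _) (Filter.Eventually.of_forall hpw)
      _ = 4 / C ^ 2 * A := MeasureTheory.integral_const_mul _ _
  have hZ2nonneg : 0 ≤ ∫ x, (Z x) ^ 2 ∂μ := integral_nonneg fun x => sq_nonneg _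
  -- final arithmetic
  have hAhalfpos : 0 < A ^ ((2:ℝ)⁻¹) := Real.rpow_pos_of_pos hApos _
  have hAhalf : A ^ ((2:ℝ)⁻¹) * A ^ ((2:ℝ)⁻¹) = A := by
    rw [← Real.rpow_add hApos]
    norm_num
  have hAhalfle : A ^ ((2:ℝ)⁻¹) ≤ 4 := by
    calc A ^ ((2:ℝ)⁻¹) ≤ (16:ℝ) ^ ((2:ℝ)⁻¹) := Real.rpow_le_rpow hA0 hA16 (by norm_num)
      _ = 4 := by
        rw [show (16:ℝ) = 4 ^ ((2:ℕ):ℝ) by rw [Real.rpow_natCast]; norm_num,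
          ← Real.rpow_mul (by norm_num : (0:ℝ) ≤ 4)]
        norm_num
  have hC2 : C ^ 2 = 16 * L ^ 2 + 8 * L + 1 := by rw [hCdef]; ring
  have hmain : L ^ 2 * (∫ x, (Z x) ^ 2 ∂μ) < A ^ ((2:ℝ)⁻¹) := by
    have h1 : L ^ 2 * (∫ x, (Z x) ^ 2 ∂μ) ≤ L ^ 2 * (4 / C ^ 2 * A) :=
      mul_le_mul_of_nonneg_left hZ2 (sq_nonneg L)
    refine lt_of_le_of_lt h1 ?_
    have hC2pos : (0:ℝ) < C ^ 2 := by positivity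
    rw [show L ^ 2 * (4 / C ^ 2 * A) = L ^ 2 * 4 * A / C ^ 2 by ring, div_lt_iff₀ hC2pos]
    have hkey : 4 * L ^ 2 * A ^ ((2:ℝ)⁻¹) * A ^ ((2:ℝ)⁻¹) ≤ 4 * L ^ 2 * A ^ ((2:ℝ)⁻¹) * 4 :=
      mul_le_mul_of_nonneg_left hAhalfle (by positivity)
    nlinarith [hkey, hAhalf, hC2, hAhalfpos, hL, mul_pos hL hAhalfpos]
  have hsq : (A ^ ((4:ℝ)⁻¹)) ^ 2 = A ^ ((2:ℝ)⁻¹) := by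
    rw [← Real.rpow_natCast (A ^ ((4:ℝ)⁻¹)) 2, ← Real.rpow_mul hA0]
    norm_num
  have hfin : L * l2Norm μ Z < A ^ ((4:ℝ)⁻¹) := by
    refine lt_of_pow_lt_pow_left₀ 2 (Real.rpow_nonneg hA0 _) ?_
    rw [hsq, mul_pow, l2Norm, Real.sq_sqrt hZ2nonneg]
    exact hmain
  exact lt_of_lt_of_le hfin hpsi
end
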